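/- Let G be a circular-arc graph with no twins and no universal vertices. For a normalized model ψ of G define its straightening φ by letting φ(v) be the oriented chord whose tail and head are, respectively, the initial and final endpoints of the arc ψ(v) (with respect to the positive circular direction along ψ(v)). For a conformal model φ of G_ov define its bending ψ by letting ψ(v) be the closed arc running in the positive circular direction from the tail of φ(v) to the head of φ(v). Then the straightening of every normalized model of G is a conformal model of G_ov, the bending of every conformal model of G_ov is a normalized model of G, and straightening and bending are mutually inverse; hence they establish a one-to-one correspondence between the normalized models of G and the conformal models of G_ov. -/

import Mathlib

set_option maxHeartbeats 1000000


namespace CAIso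

/-- The circle on which all models live. -/
abbrev Circle1 : Type := UnitAddCircle

variable {V : Type*}

/-- Closed neighborhood of a vertex. -/
def cnbr (G : SimpleGraph V) (v : V) : Set V := insert v {u | G.Adj v u}

/-- `G` has no twins: distinct vertices have distinct closed neighborhoods. -/
def NoTwins (G : SimpleGraph V) : Prop := ∀ u v : V, u ≠ v → cnbr G u ≠ cnbr G v

/-- `G` has no universal vertices. -/
def NoUniversal (G : SimpleGraph V) : Prop := ∀ v : V, cnbr G v ≠ Set.univ

/-- `v di u` : non-adjacent (distinct) vertices. -/
def Di (G : SimpleGraph V) (v u : V) : Prop := v ≠ u ∧ ¬ G.Adj v u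
/-- `v cs u` : `N[u] ⊊ N[v]`. -/
def Cs (G : SimpleGraph V) (v u : V) : Prop := v ≠ u ∧ cnbr G u ⊂ cnbr G v
/-- `v cd u` : `N[v] ⊊ N[u]`. -/
def Cd (G : SimpleGraph V) (v u : V) : Prop := v ≠ u ∧ cnbr G v ⊂ cnbr G u
/-- `v cc u`. -/
def Cc (G : SimpleGraph V) (v u : V) : Prop :=
  v ≠ u ∧ G.Adj v u ∧ cnbr G v ∪ cnbr G u = Set.univ ∧
  (∀ w ∈ cnbr G v \ cnbr G u, cnbr G w ⊂ cnbr G v) ∧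
  (∀ w ∈ cnbr G u \ cnbr G v, cnbr G w ⊂ cnbr G u)
/-- `v ov u` : the overlap relation `∼` of the overlap graph `G_ov`. -/
def Ov (G : SimpleGraph V) (v u : V) : Prop :=
  v ≠ u ∧ ¬ Di G v u ∧ ¬ Cs G v u ∧ ¬ Cd G v u ∧ ¬ Cc G v u
/-- `v ∥ u` : distinct and not `∼`-adjacent (complement of the overlap graph). -/
def ParR (G : SimpleGraph V) (v u : V) : Prop := v ≠ u ∧ ¬ Ov G v u

/-- `left(v)`. -/
def leftSet (G : SimpleGraph V) (v : V) : Set V := {u | Cs G v u ∨ Cc G v u}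
/-- `right(v)`. -/
def rightSet (G : SimpleGraph V) (v : V) : Set V := {u | Di G v u ∨ Cd G v u}

/-- The labeled endpoint map of a model: `(v, false)` is the first endpoint
(tail of a chord / initial endpoint of an arc, the letter `v⁰`), `(v, true)` the second
(the letter `v¹`). -/
def lep (φ : V → Circle1 × Circle1) (p : V × Bool) : Circle1 :=
  if p.2 then (φ p.1).2 else (φ p.1).1

/-- All endpoints of the objects assigned to vertices of `M` are pairwise distinct. -/
def DistinctEndpointsOn (M : Set V) (φ : V → Circle1 × Circle1) : Prop :=
  Set.InjOn (lep φ) {p : V × Bool | p.1 ∈ M}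

/-- The closed arc running in the positive direction from `c.1` to `c.2`. -/
def arcPts (c : Circle1 × Circle1) : Set Circle1 := {x | btw c.1 x c.2}
/-- The closed arc from `a` to `b` (positive direction). -/
def arcSet (a b : Circle1) : Set Circle1 := {x | btw a x b}
/-- The open arc from `a` to `b` (positive direction). -/
def oarcSet (a b : Circle1) : Set Circle1 := {x | sbtw a x b}

/-- A circular-arc model of `G`. -/
def IsCAModel (G : SimpleGraph V) (ψ : V → Circle1 × Circle1) : Prop :=
  DistinctEndpointsOn Set.univ ψ ∧
  ∀ u v : V, u ≠ v → (G.Adj u v ↔ (arcPts (ψ u) ∩ arcPts (ψ v)).Nonempty)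

/-- `G` is a circular-arc graph. -/
def IsCircularArc (G : SimpleGraph V) : Prop := ∃ ψ, IsCAModel G ψ

/-- Two arcs overlap: they intersect, neither contains the other,
and their union is not the whole circle. -/
def ArcsOverlap (c d : Circle1 × Circle1) : Prop :=
  (arcPts c ∩ arcPts d).Nonempty ∧ ¬ arcPts c ⊆ arcPts d ∧ ¬ arcPts d ⊆ arcPts c ∧
  arcPts c ∪ arcPts d ≠ Set.univ

/-- A normalized circular-arc model of `G`. -/
def IsNormalizedModel (G : SimpleGraph V) (ψ : V → Circle1 × Circle1) : Prop :=
  IsCAModel G ψ ∧ ∀ u v : V, u ≠ v →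
    ((Di G v u ↔ arcPts (ψ v) ∩ arcPts (ψ u) = ∅) ∧
     (Cs G v u ↔ arcPts (ψ u) ⊂ arcPts (ψ v)) ∧
     (Cd G v u ↔ arcPts (ψ v) ⊂ arcPts (ψ u)) ∧
     (Cc G v u ↔ arcPts (ψ v) ∪ arcPts (ψ u) = Set.univ) ∧
     (Ov G v u ↔ ArcsOverlap (ψ v) (ψ u)))

/-- Two chords cross: each open arc determined by `c` contains exactly one endpoint of `d`. -/
def Crosses (c d : Circle1 × Circle1) : Prop :=
  (sbtw c.1 d.1 c.2 ∧ sbtw c.2 d.2 c.1) ∨ (sbtw c.1 d.2 c.2 ∧ sbtw c.2 d.1 c.1)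

/-- A chord model of the relation `r` on the vertex set `M`. -/
def IsChordModelOn (r : V → V → Prop) (M : Set V) (φ : V → Circle1 × Circle1) : Prop :=
  DistinctEndpointsOn M φ ∧ ∀ u ∈ M, ∀ v ∈ M, u ≠ v → (r u v ↔ Crosses (φ u) (φ v))

/-- Chord `d` lies on the left side of the oriented chord `c = (tail, head)`:
both endpoints of `d` lie in the open arc from the tail of `c` to the head of `c`. -/
def OnLeft (c d : Circle1 × Circle1) : Prop := sbtw c.1 d.1 c.2 ∧ sbtw c.1 d.2 c.2
/-- Chord `d` lies on the right side of the oriented chord `c`. -/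
def OnRight (c d : Circle1 × Circle1) : Prop := sbtw c.2 d.1 c.1 ∧ sbtw c.2 d.2 c.1

/-- A conformal (oriented chord) model of `(M, ∼)`, where `∼` is the overlap relation of `G`. -/
def IsConformalOn (G : SimpleGraph V) (M : Set V) (φ : V → Circle1 × Circle1) : Prop :=
  IsChordModelOn (Ov G) M φ ∧
  ∀ v ∈ M, ∀ u ∈ M, u ≠ v →
    ((u ∈ leftSet G v ↔ OnLeft (φ v) (φ u)) ∧ (u ∈ rightSet G v ↔ OnRight (φ v) (φ u)))

/-- `x ∼ M` : `x` is `∼`-adjacent to every vertex of `M`. -/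
def SimAll (G : SimpleGraph V) (x : V) (M : Set V) : Prop := ∀ m ∈ M, Ov G x m
/-- `x ∥ M`. -/
def ParAll (G : SimpleGraph V) (x : V) (M : Set V) : Prop := ∀ m ∈ M, ParR G x m

/-- A module of the overlap graph `G_ov`. -/
def IsModule (G : SimpleGraph V) (M : Set V) : Prop :=
  M.Nonempty ∧ ∀ x ∉ M, SimAll G x M ∨ ParAll G x M

/-- A strong module of `G_ov`. -/
def IsStrongModule (G : SimpleGraph V) (M : Set V) : Prop :=
  IsModule G M ∧ ∀ N, IsModule G N → N ⊆ M ∨ M ⊆ N ∨ Disjoint M N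

/-- A proper module: some outside vertex is `∼`-adjacent to all of `M`. -/
def ProperModule (G : SimpleGraph V) (M : Set V) : Prop := ∃ x ∉ M, SimAll G x M

/-- `N` is a child of `M` in the modular decomposition:
a maximal strong module properly contained in `M`. -/
def IsChildOf (G : SimpleGraph V) (M N : Set V) : Prop :=
  IsStrongModule G N ∧ N ⊂ M ∧ ∀ N', IsStrongModule G N' → N' ⊂ M → N ⊆ N' → N' = N

def NonSingleton (M : Set V) : Prop := ∃ x ∈ M, ∃ y ∈ M, x ≠ y

def ChildrenPairwiseSim (G : SimpleGraph V) (M : Set V) : Prop :=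
  ∀ N₁ N₂, IsChildOf G M N₁ → IsChildOf G M N₂ → N₁ ≠ N₂ → ∀ x ∈ N₁, ∀ y ∈ N₂, Ov G x y
def ChildrenPairwisePar (G : SimpleGraph V) (M : Set V) : Prop :=
  ∀ N₁ N₂, IsChildOf G M N₁ → IsChildOf G M N₂ → N₁ ≠ N₂ → ∀ x ∈ N₁, ∀ y ∈ N₂, ParR G x y

/-- A serial strong module of the modular decomposition of `G_ov`. -/
def SerialM (G : SimpleGraph V) (M : Set V) : Prop :=
  IsStrongModule G M ∧ NonSingleton M ∧ ChildrenPairwiseSim G M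
/-- A parallel strong module. -/
def ParallelM (G : SimpleGraph V) (M : Set V) : Prop :=
  IsStrongModule G M ∧ NonSingleton M ∧ ChildrenPairwisePar G M
/-- A prime strong module (neither serial nor parallel). -/
def PrimeM (G : SimpleGraph V) (M : Set V) : Prop :=
  IsStrongModule G M ∧ NonSingleton M ∧ ¬ ChildrenPairwiseSim G M ∧ ¬ ChildrenPairwisePar G M

/-- The graph induced by the (symmetrized) relation `r` on the set `M` is connected. -/
def ConnOn (r : V → V → Prop) (M : Set V) : Prop :=
  M.Nonempty ∧ ∀ ⦃x⦄, x ∈ M → ∀ ⦃y⦄, y ∈ M →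
    Relation.ReflTransGen (fun a b => a ∈ M ∧ b ∈ M ∧ (r a b ∨ r b a)) x y

/-- `N[M]`, the set of outside vertices `∼`-adjacent to all of `M`. -/
def nbrMod (G : SimpleGraph V) (M : Set V) : Set V := {x | x ∉ M ∧ SimAll G x M}

/-- `C[M]`, the vertex set of the connected component of `G_ov` containing `M`. -/
def compOf (G : SimpleGraph V) (M : Set V) : Set V :=
  {x | ∃ m ∈ M, Relation.ReflTransGen (fun a b => Ov G a b ∨ Ov G b a) x m}

/-- The set of endpoints of the chords/arcs of the vertices in `A`. -/
def eptSet (φ : V → Circle1 × Circle1) (A : Set V) : Set Circle1 :=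
  {x | ∃ p : V × Bool, p.1 ∈ A ∧ lep φ p = x}

/-- The set of circle points realizing a set of labeled letters. -/
def lepIm (φ : V → Circle1 × Circle1) (P : Set (V × Bool)) : Set Circle1 :=
  {x | ∃ p ∈ P, lep φ p = x}

/-- `X` is contiguous in `Y`: `X = Y ∩ A` for a circular arc `A`. -/
def ContiguousIn (X Y : Set Circle1) : Prop := ∃ a b : Circle1, a ≠ b ∧ X = Y ∩ arcSet a b

/-- `X` forms two contiguous blocks in `Y`. -/
def TwoBlocks (Y X : Set Circle1) : Prop :=
  ∃ X₁ X₂ : Set Circle1, X₁.Nonempty ∧ X₂.Nonempty ∧ Disjoint X₁ X₂ ∧ X₁ ∪ X₂ = X ∧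
    ContiguousIn X₁ Y ∧ ContiguousIn X₂ Y

/-- The endpoints of `M` form two contiguous blocks, given by the arcs `(a,b)` and `(a',b')`,
within the endpoints of `Y`, each block containing exactly one endpoint of each chord of `M`. -/
def BlockDecomp (φ : V → Circle1 × Circle1) (Y M : Set V) (a b a' b' : Circle1) : Prop :=
  a ≠ b ∧ a' ≠ b' ∧
  a ∉ eptSet φ Y ∧ b ∉ eptSet φ Y ∧ a' ∉ eptSet φ Y ∧ b' ∉ eptSet φ Y ∧
  Disjoint (eptSet φ Y ∩ arcSet a b) (eptSet φ Y ∩ arcSet a' b') ∧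
  (eptSet φ Y ∩ arcSet a b) ∪ (eptSet φ Y ∩ arcSet a' b') = eptSet φ M ∧
  ∀ v ∈ M, (lep φ (v, false) ∈ arcSet a b ∧ lep φ (v, true) ∈ arcSet a' b') ∨
           (lep φ (v, false) ∈ arcSet a' b' ∧ lep φ (v, true) ∈ arcSet a b)

/-- Reading order along the arc `(a,b)`: some endpoint of `u` inside the arc
precedes some endpoint of `w` inside the arc. -/
def rdOrd (φ : V → Circle1 × Circle1) (a b : Circle1) (u w : V) : Prop :=
  ∃ p q : Bool, lep φ (u, p) ∈ arcSet a b ∧ lep φ (w, q) ∈ arcSet a b ∧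
    lep φ (u, p) ≠ lep φ (w, q) ∧ btw a (lep φ (u, p)) (lep φ (w, q))

/-- The letter of `u` belonging to `P` precedes the letter of `w` belonging to `P`,
reading from the point `a` in the positive direction. -/
def precInSet (φ : V → Circle1 × Circle1) (P : Set (V × Bool)) (a : Circle1) (u w : V) : Prop :=
  ∃ p q : Bool, (u, p) ∈ P ∧ (w, q) ∈ P ∧ lep φ (u, p) ≠ lep φ (w, q) ∧
    btw a (lep φ (u, p)) (lep φ (w, q))

/-- `r` is a strict linear order on the set `M`. -/
def IsLinOrderOn (M : Set V) (r : V → V → Prop) : Prop :=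
  (∀ x ∈ M, ¬ r x x) ∧
  (∀ x ∈ M, ∀ y ∈ M, ∀ z ∈ M, r x y → r y z → r x z) ∧
  (∀ x ∈ M, ∀ y ∈ M, x ≠ y → (r x y ↔ ¬ r y x))

/-- `(r₁, r₂)` is a permutation model of the graph `(M, adj)`. -/
def IsPermModelOn (adj : V → V → Prop) (M : Set V) (r₁ r₂ : V → V → Prop) : Prop :=
  IsLinOrderOn M r₁ ∧ IsLinOrderOn M r₂ ∧
  ∀ x ∈ M, ∀ y ∈ M, x ≠ y → (adj x y ↔ (r₁ x y ↔ r₂ x y))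

/-- `r` is an orientation of the edges `E` restricted to `M`. -/
def IsOrientationOn (E : V → V → Prop) (M : Set V) (r : V → V → Prop) : Prop :=
  (∀ x y, r x y → x ∈ M ∧ y ∈ M ∧ E x y) ∧
  (∀ x ∈ M, ∀ y ∈ M, E x y → (r x y ↔ ¬ r y x))

/-- `r` is a transitive orientation of the edges `E` restricted to `M`. -/
def IsTransOrientOn (E : V → V → Prop) (M : Set V) (r : V → V → Prop) : Prop :=
  IsOrientationOn E M r ∧ ∀ x y z, r x y → r y z → r x z

/-- The cyclic betweenness of three labeled endpoints of a model. -/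
def sb3 (φ : V → Circle1 × Circle1) (p q r : V × Bool) : Prop :=
  sbtw (lep φ p) (lep φ q) (lep φ r)

/-- Equivalence of oriented chord models restricted to `M` (equal circular words
over the labeled letters). -/
def OEquivOn (M : Set V) (φ ψ : V → Circle1 × Circle1) : Prop :=
  ∀ p q r : V × Bool, p.1 ∈ M → q.1 ∈ M → r.1 ∈ M → (sb3 φ p q r ↔ sb3 ψ p q r)

def flipB : V × Bool → V × Bool := fun p => (p.1, !p.2)

/-- `ψ` is (equivalent to) the reflection of `φ` on `M`: the circular word of `ψ`
is the reverse of that of `φ` with `v⁰` and `v¹` exchanged. -/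
def OReflOn (M : Set V) (φ ψ : V → Circle1 × Circle1) : Prop :=
  ∀ p q r : V × Bool, p.1 ∈ M → q.1 ∈ M → r.1 ∈ M →
    (sb3 φ p q r ↔ sb3 ψ (flipB r) (flipB q) (flipB p))

def swapBy (h : V → Bool) : V × Bool → V × Bool := fun p => (p.1, xor p.2 (h p.1))

/-- Equivalence of (non-oriented) chord models: equal circular word representations. -/
def UEquiv (φ ψ : V → Circle1 × Circle1) : Prop :=
  ∃ h : V → Bool, ∀ p q r : V × Bool,
    sb3 φ p q r ↔ sb3 ψ (swapBy h p) (swapBy h q) (swapBy h r)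

/-- `ψ` is equivalent to the reflection of the (non-oriented) chord model `φ`. -/
def UReflEquiv (φ ψ : V → Circle1 × Circle1) : Prop :=
  ∃ h : V → Bool, ∀ p q r : V × Bool,
    sb3 φ p q r ↔ sb3 ψ (swapBy h r) (swapBy h q) (swapBy h p)

/-- The sets `S 0, …, S (n-1)` appear in this circular order around the circle:
there are cut points, in cyclic order, such that `S i` lies in the `i`-th gap. -/
def SetsInCyclicOrder (n : ℕ) (S : ℕ → Set Circle1) : Prop :=
  ∃ r : ℕ → ℝ,
    (∀ i j, i < j → j < n → r i < r j) ∧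
    (∀ i, i < n → ∀ j, j < n → r i < r j + 1) ∧
    ∀ i, i < n → ∀ x ∈ S i, sbtw ((r i : ℝ) : Circle1) x ((r ((i + 1) % n) : ℝ) : Circle1)

/-- A split `(A, α(A), B, α(B))` of the graph `G`. -/
def IsSplit (G : SimpleGraph V) (A aA B aB : Set V) : Prop :=
  A.Nonempty ∧ B.Nonempty ∧
  Disjoint A aA ∧ Disjoint A B ∧ Disjoint A aB ∧
  Disjoint aA B ∧ Disjoint aA aB ∧ Disjoint B aB ∧
  A ∪ aA ∪ B ∪ aB = Set.univ ∧
  (∀ a ∈ A, ∀ b ∈ B, G.Adj a b) ∧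
  (∀ x ∈ aA, ∀ y ∈ B ∪ aB, ¬ G.Adj x y) ∧
  (∀ x ∈ aB, ∀ y ∈ A ∪ aA, ¬ G.Adj x y)

/-- A non-trivial split. -/
def NontrivialSplit (G : SimpleGraph V) (A aA B aB : Set V) : Prop :=
  IsSplit G A aA B aB ∧ 1 < (A ∪ aA).ncard ∧ 1 < (B ∪ aB).ncard

/-- The metaedge `(M⁰, M¹, <_M)` of the module `M` with representant `rep`:
`M⁰, M¹` partition the labeled letters of `M` (one letter of each vertex on each side,
with `rep⁰ ∈ M⁰`), `<_M` is a transitive orientation of `(M, ∥)`, and in every conformal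
model of `G_ov`, for every decomposition of the letters of `M` into two contiguous blocks
among the letters of `C[M]` whose first block contains `rep⁰`, the first block consists
exactly of the letters `M⁰`, the second of `M¹`, and the reading order of the first block
restricted to `∥`-pairs is exactly `<_M`. -/
def IsMetaedge (G : SimpleGraph V) (M : Set V) (rep : V)
    (M0 M1 : Set (V × Bool)) (lt : V → V → Prop) : Prop :=
  M0 ∪ M1 = {p : V × Bool | p.1 ∈ M} ∧ Disjoint M0 M1 ∧
  (∀ v ∈ M, ((v, false) ∈ M0 ↔ (v, true) ∈ M1)) ∧
  (rep, false) ∈ M0 ∧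
  IsTransOrientOn (ParR G) M lt ∧
  ∀ φ : V → Circle1 × Circle1, IsConformalOn G Set.univ φ →
    ∀ a b a' b' : Circle1, BlockDecomp φ (compOf G M) M a b a' b' →
      lep φ (rep, false) ∈ arcSet a b →
      ((∀ p : V × Bool, p.1 ∈ M →
          ((p ∈ M0 ↔ lep φ p ∈ arcSet a b) ∧ (p ∈ M1 ↔ lep φ p ∈ arcSet a' b'))) ∧
       ∀ x ∈ M, ∀ y ∈ M, ParR G x y → (lt x y ↔ precInSet φ M0 a x y))

/-- In the model `φ`, the letters `W0` are placed in the open arc `(c0, d0)`, the letters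
`W1` in the open arc `(c1, d1)`, and the two induced reading orders form an (admissible)
oriented permutation model of `(Wset, ∼)` whose first order agrees with `lt` on `∥`-pairs. -/
def AdmissiblePlacedAt (G : SimpleGraph V) (φ : V → Circle1 × Circle1)
    (Wset : Set V) (W0 W1 : Set (V × Bool)) (lt : V → V → Prop)
    (c0 d0 c1 d1 : Circle1) : Prop :=
  (∀ p ∈ W0, sbtw c0 (lep φ p) d0) ∧
  (∀ p ∈ W1, sbtw c1 (lep φ p) d1) ∧
  (∀ x ∈ Wset, ∀ y ∈ Wset, x ≠ y →
    (Ov G x y ↔ (precInSet φ W0 c0 x y ↔ precInSet φ W1 c1 x y))) ∧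
  (∀ x ∈ Wset, ∀ y ∈ Wset, ParR G x y → (lt x y ↔ precInSet φ W0 c0 x y))

/-- An improper prime strong module: `(M,∼)` and `(M,∥)` are connected
and no outside vertex is `∼`-adjacent to all of `M`. -/
def ImproperPrime (G : SimpleGraph V) (M : Set V) : Prop :=
  IsStrongModule G M ∧ ConnOn (Ov G) M ∧ ConnOn (ParR G) M ∧ ¬ ProperModule G M

/-- `U` is a transversal of `M`: it contains exactly one vertex of each child of `M`. -/
def IsTransversal (G : SimpleGraph V) (M U : Set V) : Prop :=
  U ⊆ M ∧ (∀ N, IsChildOf G M N → ∃! u, u ∈ U ∩ N) ∧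
  ∀ u ∈ U, ∃ N, IsChildOf G M N ∧ u ∈ N

/-- A probe `(y, x, X, α(X))` in the graph `(Uset, ∼)`. -/
def IsProbe (G : SimpleGraph V) (Uset : Set V) (y x : V) (X aX : Set V) : Prop :=
  x ≠ y ∧ X.Nonempty ∧ aX.Nonempty ∧
  Disjoint ({x, y} : Set V) X ∧ Disjoint ({x, y} : Set V) aX ∧ Disjoint X aX ∧
  ({x, y} ∪ X ∪ aX) ⊂ Uset ∧
  Ov G y x ∧ (∀ z ∈ X ∪ aX, ParR G y z) ∧ (∀ z ∈ X, Ov G x z) ∧ (∀ z ∈ aX, ParR G x z) ∧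
  ConnOn (Ov G) ({x, y} ∪ X ∪ aX) ∧
  ∀ z ∈ Uset \ ({x, y} ∪ X ∪ aX),
    (∀ w ∈ X ∪ aX, ParR G z w) ∨ ((∀ w ∈ X, Ov G z w) ∧ ∀ w ∈ aX, ParR G z w) ∨
    (∀ w ∈ X ∪ aX, Ov G z w)

/-- The `K`-relation on a child `Mi` of an improper prime module, relative to the
transversal `U`; its equivalence classes are the consistent submodules. -/
def KrelOn (G : SimpleGraph V) (U Mi : Set V) (v v' : V) : Prop :=
  v ∈ Mi ∧ v' ∈ Mi ∧
  (v = v' ∨ PrimeM G Mi ∨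
   (ParallelM G Mi ∧ ∀ u ∈ U \ Mi,
      (v ∈ leftSet G u ∧ v' ∈ leftSet G u) ∨ (v ∈ rightSet G u ∧ v' ∈ rightSet G u)) ∨
   (SerialM G Mi ∧
      ({leftSet G v ∩ (U \ Mi), rightSet G v ∩ (U \ Mi)} : Set (Set V)) =
       {leftSet G v' ∩ (U \ Mi), rightSet G v' ∩ (U \ Mi)}))

/-- `M` is the vertex set of a connected component of `G_ov`. -/
def IsCompOf (G : SimpleGraph V) (M : Set V) : Prop :=
  ∃ v, M = {u | Relation.ReflTransGen (fun a b => Ov G a b ∨ Ov G b a) v u}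

/-- `v` separates the modules `M₁` and `M₂`. -/
def Separates (G : SimpleGraph V) (v : V) (M₁ M₂ : Set V) : Prop :=
  v ∉ M₁ ∪ M₂ ∧
  ((M₁ ⊆ leftSet G v ∧ M₂ ⊆ rightSet G v) ∨ (M₂ ⊆ leftSet G v ∧ M₁ ⊆ rightSet G v))

def NonSep (G : SimpleGraph V) (M₁ M₂ : Set V) : Prop := ¬ ∃ v, Separates G v M₁ M₂

/-- A node: a maximal set of pairwise non-separated components of `G_ov`. -/
def IsNode (G : SimpleGraph V) (N : Set (Set V)) : Prop :=
  (∀ M ∈ N, IsCompOf G M) ∧ (∀ M₁ ∈ N, ∀ M₂ ∈ N, NonSep G M₁ M₂) ∧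
  (∀ M', IsCompOf G M' → (∀ M ∈ N, NonSep G M' M) → M' ∈ N)

/-- The vertex set of the bipartite graph `T_NM` : modules (components of `G_ov`) on the
left, nodes on the right. -/
def TVert (G : SimpleGraph V) : Type _ :=
  {M : Set V // IsCompOf G M} ⊕ {N : Set (Set V) // IsNode G N}

/-- The bipartite graph `T_NM`. -/
def TNM (G : SimpleGraph V) : SimpleGraph (TVert G) where
  Adj x y :=
    match x, y with
    | Sum.inl M, Sum.inr N => M.1 ∈ N.1
    | Sum.inr N, Sum.inl M => M.1 ∈ N.1
    | _, _ => False
  symm := ⟨by rintro (M | N) (M' | N') h <;> exact h⟩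
  loopless := ⟨by rintro (M | N) h <;> exact h⟩

/-- The set of vertices of `G` contained in the modules lying in the connected component
of `T_NM − x₀` containing `y`. -/
def VTavoid (G : SimpleGraph V) (x₀ y : TVert G) : Set V :=
  {u | ∃ M : {M : Set V // IsCompOf G M},
    Relation.ReflTransGen (fun a c => (TNM G).Adj a c ∧ a ≠ x₀ ∧ c ≠ x₀) y (Sum.inl M) ∧
    u ∈ M.1}

/-- Straightening: the oriented chord of `v` has as tail and head, respectively, the
initial and final endpoints of the arc of `v` (w.r.t. the positive direction). -/
def straighten {V : Type*} (ψ : V → Circle1 × Circle1) : V → Circle1 × Circle1 :=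
  fun v => ((ψ v).1, (ψ v).2)

/-- Bending: the arc of `v` runs in the positive direction from the tail to the head
of the oriented chord of `v`. -/
def bend {V : Type*} (φ : V → Circle1 × Circle1) : V → Circle1 × Circle1 :=
  fun v => ((φ v).1, (φ v).2)

def Dr (u v w : ℝ) : Prop := Int.fract (v - u) ≤ 1 - Int.fract (u - w)
def B3 (u v w : ℝ) : Prop := (u ≤ v ∧ v ≤ w) ∨ (v ≤ w ∧ w ≤ u) ∨ (w ≤ u ∧ u ≤ v)
def C3 (u v w : ℝ) : Prop := (u < v ∧ v < w) ∨ (v < w ∧ w < u) ∨ (w < u ∧ u < v)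

lemma toIcoMod_one (u v : ℝ) : toIcoMod one_pos u v = u + Int.fract (v - u) := by
  rw [toIcoMod_eq_iff]
  refine ⟨⟨by linarith [Int.fract_nonneg (v - u)], by linarith [Int.fract_lt_one (v - u)]⟩,
    ⟨⌊v - u⌋, by have := Int.self_sub_fract (v - u); simp only [zsmul_eq_mul]; linarith⟩⟩

lemma toIocMod_one (u w : ℝ) : toIocMod one_pos u w = u + 1 - Int.fract (u - w) := by
  rw [toIocMod_eq_iff]
  refine ⟨⟨by linarith [Int.fract_lt_one (u - w)], by linarith [Int.fract_nonneg (u - w)]⟩,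
    ⟨-⌊u - w⌋ - 1, by have := Int.self_sub_fract (u - w); simp only [zsmul_eq_mul]; push_cast; linarith⟩⟩

lemma btw_iff_Dr {u v w : ℝ} : btw (↑u : Circle1) ↑v ↑w ↔ Dr u v w := by
  rw [show ((u:Circle1)) = (u : ℝ ⧸ AddSubgroup.zmultiples (1:ℝ)) from rfl]
  rw [QuotientAddGroup.btw_coe_iff]
  rw [show (Fact.out : (0:ℝ) < 1) = one_pos from rfl]
  rw [toIcoMod_one, toIocMod_one, Dr]
  constructor <;> intro h <;> linarith

lemma sbtw_iff_Dr {u v w : ℝ} : sbtw (↑u : Circle1) ↑v ↑w ↔ Dr u v w ∧ ¬ Dr w v u := by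
  rw [sbtw_iff_btw_not_btw, btw_iff_Dr, btw_iff_Dr]

lemma fr_char {u v : ℝ} (hu0 : 0 ≤ u) (hu1 : u < 1) (hv0 : 0 ≤ v) (hv1 : v < 1) :
    Int.fract (v - u) = if u ≤ v then v - u else v - u + 1 := by
  split_ifs with h
  · exact Int.fract_eq_self.2 ⟨by linarith, by linarith⟩
  · have h' := lt_of_not_ge h
    rw [show Int.fract (v - u) = Int.fract (v - u + 1) from (Int.fract_add_one _).symm]
    exact Int.fract_eq_self.2 ⟨by linarith, by linarith⟩

lemma Dr_iff_B3 {u v w : ℝ} (hu0 : 0 ≤ u) (hu1 : u < 1) (hv0 : 0 ≤ v) (hv1 : v < 1)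
    (hw0 : 0 ≤ w) (hw1 : w < 1) : Dr u v w ↔ B3 u v w := by
  rw [Dr, fr_char hu0 hu1 hv0 hv1, fr_char hw0 hw1 hu0 hu1, B3]
  split_ifs with h1 h2 h3
  · constructor
    · intro _; exact Or.inr (Or.inr ⟨h2, h1⟩)
    · intro _; linarith
  · have h2' := lt_of_not_ge h2
    constructor
    · intro h; exact Or.inl ⟨h1, by linarith⟩
    · rintro (⟨h3,h4⟩ | ⟨h3,h4⟩ | ⟨h3,h4⟩) <;> linarith
  · have h1' := lt_of_not_ge h1
    constructor
    · intro h; exact Or.inr (Or.inl ⟨by linarith, h3⟩)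
    · rintro (⟨h4,h5⟩ | ⟨h4,h5⟩ | ⟨h4,h5⟩) <;> linarith
  · have h1' := lt_of_not_ge h1
    have h3' := lt_of_not_ge h3
    constructor
    · intro h; linarith
    · rintro (⟨h4,h5⟩ | ⟨h4,h5⟩ | ⟨h4,h5⟩) <;> linarith

lemma btw_iff_B3 {u v w : ℝ} (hu0 : 0 ≤ u) (hu1 : u < 1) (hv0 : 0 ≤ v) (hv1 : v < 1)
    (hw0 : 0 ≤ w) (hw1 : w < 1) : btw (↑u : Circle1) ↑v ↑w ↔ B3 u v w := by
  rw [btw_iff_Dr, Dr_iff_B3 hu0 hu1 hv0 hv1 hw0 hw1]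

lemma C3_total {u v w : ℝ} (h1 : u ≠ v) (h2 : v ≠ w) (h3 : w ≠ u) : C3 u v w ∨ C3 w v u := by
  rcases h1.lt_or_gt with h1|h1 <;> rcases h2.lt_or_gt with h2|h2 <;>
    rcases h3.lt_or_gt with h3|h3 <;> unfold C3 <;> tauto

lemma C3_excl {u v w : ℝ} (h : C3 u v w) : ¬ C3 w v u := by
  intro h'; unfold C3 at *; casesm* _ ∨ _, _ ∧ _ <;> linarith

lemma C3_to_B3 {u v w : ℝ} (h : C3 u v w) : B3 u v w := by
  rcases h with ⟨h1,h2⟩|⟨h1,h2⟩|⟨h1,h2⟩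
  · exact Or.inl ⟨h1.le, h2.le⟩
  · exact Or.inr (Or.inl ⟨h1.le, h2.le⟩)
  · exact Or.inr (Or.inr ⟨h1.le, h2.le⟩)

lemma B3C3 {u v w : ℝ} (h1 : u ≠ v) (h2 : v ≠ w) (h3 : w ≠ u) :
    (B3 u v w ∧ ¬ B3 w v u) ↔ C3 u v w := by
  constructor
  · rintro ⟨hb, hnb⟩
    rcases C3_total h1 h2 h3 with h|h
    · exact h
    · exact absurd (C3_to_B3 h) hnb
  · intro h
    refine ⟨C3_to_B3 h, fun hb => ?_⟩
    unfold C3 B3 at *; casesm* _ ∨ _, _ ∧ _ <;> linarith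

lemma sbtw_iff_C3 {u v w : ℝ} (hu0 : 0 ≤ u) (hu1 : u < 1) (hv0 : 0 ≤ v) (hv1 : v < 1)
    (hw0 : 0 ≤ w) (hw1 : w < 1) (n1 : u ≠ v) (n2 : v ≠ w) (n3 : w ≠ u) :
    sbtw (↑u : Circle1) ↑v ↑w ↔ C3 u v w := by
  rw [sbtw_iff_Dr, Dr_iff_B3 hu0 hu1 hv0 hv1 hw0 hw1, Dr_iff_B3 hw0 hw1 hv0 hv1 hu0 hu1]
  exact B3C3 n1 n2 n3

lemma lift1 (x : Circle1) : ∃ u : ℝ, 0 ≤ u ∧ u < 1 ∧ (u : Circle1) = x := by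
  obtain ⟨u, rfl⟩ := QuotientAddGroup.mk_surjective x
  refine ⟨Int.fract u, Int.fract_nonneg u, Int.fract_lt_one u, ?_⟩
  have h0 : ((⌊u⌋ : ℝ) : Circle1) = 0 := by
    rw [QuotientAddGroup.eq_zero_iff]
    exact AddSubgroup.mem_zmultiples_iff.mpr ⟨⌊u⌋, by simp [zsmul_eq_mul]⟩
  rw [Int.fract, show ((u - ⌊u⌋ : ℝ) : Circle1) = ↑u - ↑(⌊u⌋:ℝ) from rfl, h0, sub_zero]

lemma coe_eq_iff {u v : ℝ} (hu0 : 0 ≤ u) (hu1 : u < 1) (hv0 : 0 ≤ v) (hv1 : v < 1) :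
    (↑u : Circle1) = ↑v ↔ u = v :=
  AddCircle.coe_eq_coe_iff_of_mem_Ico (p := 1) (a := 0)
    ⟨hu0, by rw [zero_add]; exact hu1⟩ ⟨hv0, by rw [zero_add]; exact hv1⟩

lemma coe_zero : ((0 : ℝ) : Circle1) = 0 := rfl

lemma btw_sub {x y z s : Circle1} : btw (x - s) (y - s) (z - s) ↔ btw x y z := by
  obtain ⟨u, _, _, rfl⟩ := lift1 x
  obtain ⟨v, _, _, rfl⟩ := lift1 y
  obtain ⟨w, _, _, rfl⟩ := lift1 z
  obtain ⟨s', _, _, rfl⟩ := lift1 s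
  rw [show ((u:Circle1) - ↑s') = ((u - s' : ℝ) : Circle1) from rfl,
      show ((v:Circle1) - ↑s') = ((v - s' : ℝ) : Circle1) from rfl,
      show ((w:Circle1) - ↑s') = ((w - s' : ℝ) : Circle1) from rfl,
      btw_iff_Dr, btw_iff_Dr]
  simp only [Dr, show v - s' - (u - s') = v - u by ring, show u - s' - (w - s') = u - w by ring]

lemma sbtw_sub {x y z s : Circle1} : sbtw (x - s) (y - s) (z - s) ↔ sbtw x y z := by
  rw [sbtw_iff_btw_not_btw, sbtw_iff_btw_not_btw, btw_sub, btw_sub]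

lemma btw_shift {A P x Q : Circle1} {p ξ q : ℝ}
    (hp : (p : Circle1) = P - A) (hξ : (ξ : Circle1) = x - A) (hq : (q : Circle1) = Q - A)
    (hp0 : 0 ≤ p) (hp1 : p < 1) (hξ0 : 0 ≤ ξ) (hξ1 : ξ < 1) (hq0 : 0 ≤ q) (hq1 : q < 1) :
    btw P x Q ↔ B3 p ξ q := by
  rw [← btw_sub (x := P) (y := x) (z := Q) (s := A), ← hp, ← hξ, ← hq,
      btw_iff_B3 hp0 hp1 hξ0 hξ1 hq0 hq1]

lemma sbtw_shift {A P x Q : Circle1} {p ξ q : ℝ}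
    (hp : (p : Circle1) = P - A) (hξ : (ξ : Circle1) = x - A) (hq : (q : Circle1) = Q - A)
    (hp0 : 0 ≤ p) (hp1 : p < 1) (hξ0 : 0 ≤ ξ) (hξ1 : ξ < 1) (hq0 : 0 ≤ q) (hq1 : q < 1)
    (n1 : p ≠ ξ) (n2 : ξ ≠ q) (n3 : q ≠ p) :
    sbtw P x Q ↔ C3 p ξ q := by
  rw [← sbtw_sub (x := P) (y := x) (z := Q) (s := A), ← hp, ← hξ, ← hq,
      sbtw_iff_C3 hp0 hp1 hξ0 hξ1 hq0 hq1 n1 n2 n3]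

lemma btw_rfl_left' (a b : Circle1) : btw a a b := btw_rfl_left
lemma btw_rfl_right' (a b : Circle1) : btw a b b := btw_cyclic_left (btw_cyclic_left btw_rfl_left)

lemma sbtw_total {p q x : Circle1} (hpx : p ≠ x) (hxq : x ≠ q) (hqp : q ≠ p) :
    sbtw p x q ∨ sbtw q x p := by
  rcases btw_total p x q with h | h
  · left
    rw [sbtw_iff_btw_not_btw]
    refine ⟨h, fun h' => ?_⟩
    rcases btw_antisymm h h' with rfl | rfl | rfl <;> simp_all
  · right
    rw [sbtw_iff_btw_not_btw]
    refine ⟨h, fun h' => ?_⟩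
    rcases btw_antisymm h h' with rfl | rfl | rfl <;> simp_all

lemma C3_def1 {u v : ℝ} (hu : 0 < u) (hv : 0 < v) (H : C3 u v 0) : u < v := by
  rcases H with ⟨h1,h2⟩|⟨h1,h2⟩|⟨h1,h2⟩ <;> linarith
lemma C3_def2 {u v : ℝ} (hu : 0 < u) (hv : 0 < v) (H : C3 u 0 v) : v < u := by
  rcases H with ⟨h1,h2⟩|⟨h1,h2⟩|⟨h1,h2⟩ <;> linarith
lemma C3_def3 {u v : ℝ} (hu : 0 < u) (hv : 0 < v) (H : C3 0 u v) : u < v := by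
  rcases H with ⟨h1,h2⟩|⟨h1,h2⟩|⟨h1,h2⟩ <;> linarith

section RL
variable {b t h : ℝ}

-- LR config (order 0,t,h,b): d=[t,h] strictly inside c=[0,b]
lemma RL_LR_incl (hb0 : 0 < b) (ht0 : 0 < t) (hh0 : 0 < h)
    (H1 : C3 0 t b) (H2 : C3 0 h b) (H3 : C3 h 0 t)
    {x : ℝ} (hx0 : 0 ≤ x) (hx1 : x < 1) (hm : B3 t x h) : B3 0 x b := by
  have o1 := C3_def3 ht0 hb0 H1
  have o2 := C3_def3 hh0 hb0 H2
  have o3 := C3_def2 hh0 ht0 H3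
  rcases hm with ⟨m1,m2⟩|⟨m1,m2⟩|⟨m1,m2⟩ <;>
    first
    | (exact Or.inl ⟨by linarith, by linarith⟩)
    | (exfalso; linarith)

lemma RL_LR_notmem (hb0 : 0 < b) (ht0 : 0 < t) (hh0 : 0 < h)
    (H1 : C3 0 t b) (H2 : C3 0 h b) (H3 : C3 h 0 t) : ¬ B3 t 0 h := by
  have o1 := C3_def3 ht0 hb0 H1
  have o2 := C3_def3 hh0 hb0 H2
  have o3 := C3_def2 hh0 ht0 H3
  rintro (⟨m1,m2⟩|⟨m1,m2⟩|⟨m1,m2⟩) <;> linarith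

-- RR config (order 0,b,t,h): disjoint
lemma RL_RR_empty (hb0 : 0 < b) (ht0 : 0 < t) (hh0 : 0 < h)
    (H1 : C3 b t 0) (H2 : C3 b h 0) (H3 : C3 h 0 t)
    {x : ℝ} (hx0 : 0 ≤ x) (hx1 : x < 1) (hm : B3 0 x b) : ¬ B3 t x h := by
  have o1 := C3_def1 hb0 ht0 H1
  have o2 := C3_def1 hb0 hh0 H2
  have o3 := C3_def2 hh0 ht0 H3
  rcases hm with ⟨m1,m2⟩|⟨m1,m2⟩|⟨m1,m2⟩ <;>
    rintro (⟨n1,n2⟩|⟨n1,n2⟩|⟨n1,n2⟩) <;> linarith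

lemma RL_RR_notuniv (hb0 : 0 < b) (ht0 : 0 < t) (ht1 : t < 1) (hh0 : 0 < h)
    (H1 : C3 b t 0) (H2 : C3 b h 0) (H3 : C3 h 0 t) :
    ∃ x : ℝ, 0 ≤ x ∧ x < 1 ∧ ¬ B3 0 x b ∧ ¬ B3 t x h := by
  have o1 := C3_def1 hb0 ht0 H1
  have o2 := C3_def1 hb0 hh0 H2
  have o3 := C3_def2 hh0 ht0 H3
  refine ⟨(b+t)/2, by linarith, by linarith, ?_, ?_⟩
  · rintro (⟨m1,m2⟩|⟨m1,m2⟩|⟨m1,m2⟩) <;> linarith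
  · rintro (⟨m1,m2⟩|⟨m1,m2⟩|⟨m1,m2⟩) <;> linarith

-- LL config (order 0,h,t,b): union is the whole circle
lemma RL_LL_univ (hb0 : 0 < b) (ht0 : 0 < t) (hh0 : 0 < h)
    (H1 : C3 0 t b) (H2 : C3 0 h b) (H3 : C3 t 0 h)
    {x : ℝ} (hx0 : 0 ≤ x) (hx1 : x < 1) : B3 0 x b ∨ B3 t x h := by
  have o1 := C3_def3 ht0 hb0 H1
  have o2 := C3_def3 hh0 hb0 H2
  have o3 := C3_def2 ht0 hh0 H3
  rcases le_or_gt x b with hc | hc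
  · exact Or.inl (Or.inl ⟨hx0, hc⟩)
  · exact Or.inr (Or.inr (Or.inr ⟨by linarith, by linarith⟩))

-- X1 config (order 0,t,b,h): crossing, first kind
lemma RL_X1_anotind (hb0 : 0 < b) (ht0 : 0 < t) (hh0 : 0 < h)
    (H1 : C3 0 t b) (H2 : C3 b h 0) : ¬ B3 t 0 h := by
  have o1 := C3_def3 ht0 hb0 H1
  have o2 := C3_def1 hb0 hh0 H2
  rintro (⟨m1,m2⟩|⟨m1,m2⟩|⟨m1,m2⟩) <;> linarith

lemma RL_X1_hnotinc (hb0 : 0 < b) (ht0 : 0 < t) (hh0 : 0 < h)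
    (H1 : C3 0 t b) (H2 : C3 b h 0) : ¬ B3 0 h b := by
  have o1 := C3_def3 ht0 hb0 H1
  have o2 := C3_def1 hb0 hh0 H2
  rintro (⟨m1,m2⟩|⟨m1,m2⟩|⟨m1,m2⟩) <;> linarith

lemma RL_X1_notuniv (hb0 : 0 < b) (ht0 : 0 < t) (hh0 : 0 < h) (hh1 : h < 1)
    (H1 : C3 0 t b) (H2 : C3 b h 0) :
    ∃ x : ℝ, 0 ≤ x ∧ x < 1 ∧ ¬ B3 0 x b ∧ ¬ B3 t x h := by
  have o1 := C3_def3 ht0 hb0 H1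
  have o2 := C3_def1 hb0 hh0 H2
  refine ⟨(h+1)/2, by linarith, by linarith, ?_, ?_⟩
  · rintro (⟨m1,m2⟩|⟨m1,m2⟩|⟨m1,m2⟩) <;> linarith
  · rintro (⟨m1,m2⟩|⟨m1,m2⟩|⟨m1,m2⟩) <;> linarith

lemma RL_X1_sym1 (hb0 : 0 < b) (ht0 : 0 < t) (hh0 : 0 < h)
    (H1 : C3 0 t b) (H2 : C3 b h 0) : C3 t b h :=
  Or.inl ⟨C3_def3 ht0 hb0 H1, C3_def1 hb0 hh0 H2⟩

lemma RL_X1_sym2 (hb0 : 0 < b) (ht0 : 0 < t) (hh0 : 0 < h)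
    (H1 : C3 0 t b) (H2 : C3 b h 0) : C3 h 0 t := by
  have o1 := C3_def3 ht0 hb0 H1
  have o2 := C3_def1 hb0 hh0 H2
  exact Or.inr (Or.inl ⟨ht0, by linarith⟩)

-- X2 config (order 0,h,b,t): crossing, second kind
lemma RL_X2_bnotind (hb0 : 0 < b) (ht0 : 0 < t) (hh0 : 0 < h)
    (H1 : C3 0 h b) (H2 : C3 b t 0) : ¬ B3 t b h := by
  have o1 := C3_def3 hh0 hb0 H1
  have o2 := C3_def1 hb0 ht0 H2
  rintro (⟨m1,m2⟩|⟨m1,m2⟩|⟨m1,m2⟩) <;> linarith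

lemma RL_X2_tnotinc (hb0 : 0 < b) (ht0 : 0 < t) (hh0 : 0 < h)
    (H1 : C3 0 h b) (H2 : C3 b t 0) : ¬ B3 0 t b := by
  have o1 := C3_def3 hh0 hb0 H1
  have o2 := C3_def1 hb0 ht0 H2
  rintro (⟨m1,m2⟩|⟨m1,m2⟩|⟨m1,m2⟩) <;> linarith

lemma RL_X2_notuniv (hb0 : 0 < b) (ht0 : 0 < t) (ht1 : t < 1) (hh0 : 0 < h)
    (H1 : C3 0 h b) (H2 : C3 b t 0) :
    ∃ x : ℝ, 0 ≤ x ∧ x < 1 ∧ ¬ B3 0 x b ∧ ¬ B3 t x h := by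
  have o1 := C3_def3 hh0 hb0 H1
  have o2 := C3_def1 hb0 ht0 H2
  refine ⟨(b+t)/2, by linarith, by linarith, ?_, ?_⟩
  · rintro (⟨m1,m2⟩|⟨m1,m2⟩|⟨m1,m2⟩) <;> linarith
  · rintro (⟨m1,m2⟩|⟨m1,m2⟩|⟨m1,m2⟩) <;> linarith

lemma RL_X2_sym1 (hb0 : 0 < b) (ht0 : 0 < t) (hh0 : 0 < h)
    (H1 : C3 0 h b) (H2 : C3 b t 0) : C3 t 0 h := by
  have o1 := C3_def3 hh0 hb0 H1
  have o2 := C3_def1 hb0 ht0 H2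
  exact Or.inr (Or.inl ⟨hh0, by linarith⟩)

lemma RL_X2_sym2 (hb0 : 0 < b) (ht0 : 0 < t) (hh0 : 0 < h)
    (H1 : C3 0 h b) (H2 : C3 b t 0) : C3 h b t :=
  Or.inl ⟨C3_def3 hh0 hb0 H1, C3_def1 hb0 ht0 H2⟩

lemma RL_notuniv_single (hb0 : 0 < b) (hb1 : b < 1) :
    ∃ x : ℝ, 0 ≤ x ∧ x < 1 ∧ ¬ B3 0 x b := by
  refine ⟨(b+1)/2, by linarith, by linarith, ?_⟩
  rintro (⟨m1,m2⟩|⟨m1,m2⟩|⟨m1,m2⟩) <;> linarith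

end RL

-- two extra real lemmas for the RL (c strictly inside d) configuration, order 0,b,h,t
lemma RL_RL_incl {b t h : ℝ} (hb0 : 0 < b) (ht0 : 0 < t) (hh0 : 0 < h)
    (H1 : C3 b h 0) (H2 : C3 t 0 h)
    {x : ℝ} (hx0 : 0 ≤ x) (hx1 : x < 1) (hm : B3 0 x b) : B3 t x h := by
  have o1 := C3_def1 hb0 hh0 H1
  have o2 := C3_def2 ht0 hh0 H2
  rcases hm with ⟨m1,m2⟩|⟨m1,m2⟩|⟨m1,m2⟩ <;>
    first
    | (exact Or.inr (Or.inl ⟨by linarith, by linarith⟩))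
    | (exfalso; linarith)

lemma RL_RL_notmem {b t h : ℝ} (hb0 : 0 < b) (ht0 : 0 < t) (hh0 : 0 < h)
    (H1 : C3 b h 0) (H2 : C3 t 0 h) : ¬ B3 0 t b := by
  have o1 := C3_def1 hb0 hh0 H1
  have o2 := C3_def2 ht0 hh0 H2
  rintro (⟨m1,m2⟩|⟨m1,m2⟩|⟨m1,m2⟩) <;> linarith







lemma arc_ne_univ {A B : Circle1} (hAB : A ≠ B) : arcPts (A, B) ≠ Set.univ := by
  obtain ⟨β, hβa, hβb, hβeq⟩ := lift1 (B - A)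
  have hβ0 : 0 < β := hβa.lt_of_ne (fun hzero => hAB
    (sub_eq_zero.mp (by rw [← hβeq, ← hzero]; rfl)).symm)
  obtain ⟨ξ, hξ0, hξ1, hξB⟩ := RL_notuniv_single hβ0 hβb
  intro hU
  apply hξB
  have hx : ((ξ : Circle1) + A) ∈ arcPts (A, B) := hU ▸ Set.mem_univ _
  have := (btw_shift (A := A) (P := A) (x := (ξ:Circle1) + A) (Q := B)
      (by rw [sub_self]; rfl) (by rw [add_sub_cancel_right]) hβeq
      le_rfl one_pos hξ0 hξ1 hβa hβb).mp hx
  exact this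

lemma mem_arc {A B x : Circle1} (h : btw A x B) : x ∈ arcPts (A, B) := h
lemma mem_arc_left (A B : Circle1) : A ∈ arcPts (A, B) := mem_arc btw_rfl_left
lemma mem_arc_right (A B : Circle1) : B ∈ arcPts (A, B) := mem_arc (btw_rfl_right' A B)

lemma master {A B T H : Circle1} (hAB : A ≠ B) (hAT : A ≠ T) (hAH : A ≠ H)
    (hBT : B ≠ T) (hBH : B ≠ H) (hTH : T ≠ H) :
    (OnLeft (A,B) (T,H) ∧ OnRight (T,H) (A,B) ↔ arcPts (T,H) ⊂ arcPts (A,B)) ∧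
    (OnRight (A,B) (T,H) ∧ OnLeft (T,H) (A,B) ↔ arcPts (A,B) ⊂ arcPts (T,H)) ∧
    (OnRight (A,B) (T,H) ∧ OnRight (T,H) (A,B) ↔ arcPts (A,B) ∩ arcPts (T,H) = ∅) ∧
    (OnLeft (A,B) (T,H) ∧ OnLeft (T,H) (A,B) ↔ arcPts (A,B) ∪ arcPts (T,H) = Set.univ) ∧
    (Crosses (A,B) (T,H) ↔ ArcsOverlap (A,B) (T,H)) := by
  obtain ⟨β, hβa, hβb, hβeq⟩ := lift1 (B - A)
  obtain ⟨τ, hτa, hτb, hτeq⟩ := lift1 (T - A)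
  obtain ⟨η, hηa, hηb, hηeq⟩ := lift1 (H - A)
  have hβ0 : 0 < β := hβa.lt_of_ne (fun hz => hAB
    (sub_eq_zero.mp (by rw [← hβeq, ← hz]; rfl)).symm)
  have hτ0 : 0 < τ := hτa.lt_of_ne (fun hz => hAT
    (sub_eq_zero.mp (by rw [← hτeq, ← hz]; rfl)).symm)
  have hη0 : 0 < η := hηa.lt_of_ne (fun hz => hAH
    (sub_eq_zero.mp (by rw [← hηeq, ← hz]; rfl)).symm)
  have hβτ : β ≠ τ := fun hq => hBT (by
    have h2 : B - A = T - A := by rw [← hβeq, ← hτeq, hq]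
    exact sub_left_inj.mp h2)
  have hβη : β ≠ η := fun hq => hBH (by
    have h2 : B - A = H - A := by rw [← hβeq, ← hηeq, hq]
    exact sub_left_inj.mp h2)
  have hτη : τ ≠ η := fun hq => hTH (by
    have h2 : T - A = H - A := by rw [← hτeq, ← hηeq, hq]
    exact sub_left_inj.mp h2)
  have hA0 : ((0:ℝ) : Circle1) = A - A := by rw [sub_self]; rfl
  have a1 : sbtw A T B ↔ C3 0 τ β :=
    sbtw_shift hA0 hτeq hβeq le_rfl one_pos hτa hτb hβa hβb hτ0.ne hβτ.symm hβ0.ne'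
  have a2 : sbtw A H B ↔ C3 0 η β :=
    sbtw_shift hA0 hηeq hβeq le_rfl one_pos hηa hηb hβa hβb hη0.ne hβη.symm hβ0.ne'
  have a3 : sbtw B T A ↔ C3 β τ 0 :=
    sbtw_shift hβeq hτeq hA0 hβa hβb hτa hτb le_rfl one_pos hβτ hτ0.ne' hβ0.ne
  have a4 : sbtw B H A ↔ C3 β η 0 :=
    sbtw_shift hβeq hηeq hA0 hβa hβb hηa hηb le_rfl one_pos hβη hη0.ne' hβ0.ne
  have a5 : sbtw T A H ↔ C3 τ 0 η :=
    sbtw_shift hτeq hA0 hηeq hτa hτb le_rfl one_pos hηa hηb hτ0.ne' hη0.ne hτη.symm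
  have a6 : sbtw T B H ↔ C3 τ β η :=
    sbtw_shift hτeq hβeq hηeq hτa hτb hβa hβb hηa hηb hβτ.symm hβη hτη.symm
  have a7 : sbtw H A T ↔ C3 η 0 τ :=
    sbtw_shift hηeq hA0 hτeq hηa hηb le_rfl one_pos hτa hτb hη0.ne' hτ0.ne hτη
  have a8 : sbtw H B T ↔ C3 η β τ :=
    sbtw_shift hηeq hβeq hτeq hηa hηb hβa hβb hτa hτb hβη.symm hβτ hτη
  have mc : ∀ (x : Circle1) (ξ : ℝ), 0 ≤ ξ → ξ < 1 → ((ξ:Circle1) = x - A) →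
      (x ∈ arcPts (A, B) ↔ B3 0 ξ β) :=
    fun x ξ k1 k2 k3 => btw_shift hA0 k3 hβeq le_rfl one_pos k1 k2 hβa hβb
  have md : ∀ (x : Circle1) (ξ : ℝ), 0 ≤ ξ → ξ < 1 → ((ξ:Circle1) = x - A) →
      (x ∈ arcPts (T, H) ↔ B3 τ ξ η) :=
    fun x ξ k1 k2 k3 => btw_shift hτeq k3 hηeq hτa hτb k1 k2 hηa hηb
  -- forward implications
  have F1 : OnLeft (A,B) (T,H) → OnRight (T,H) (A,B) → arcPts (T,H) ⊂ arcPts (A,B) := by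
    rintro ⟨h1, h2⟩ ⟨h3, _⟩
    have c1 := a1.mp h1; have c2 := a2.mp h2; have c3 := a7.mp h3
    have hsub : arcPts (T,H) ⊆ arcPts (A,B) := by
      intro x hx
      obtain ⟨ξ, k1, k2, k3⟩ := lift1 (x - A)
      rw [mc x ξ k1 k2 k3]
      exact RL_LR_incl hβ0 hτ0 hη0 c1 c2 c3 k1 k2 ((md x ξ k1 k2 k3).mp hx)
    exact (Set.ssubset_iff_of_subset hsub).mpr ⟨A, mem_arc_left A B,
      fun hmem => RL_LR_notmem hβ0 hτ0 hη0 c1 c2 c3 ((md A 0 le_rfl one_pos hA0).mp hmem)⟩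
  have F2 : OnRight (A,B) (T,H) → OnLeft (T,H) (A,B) → arcPts (A,B) ⊂ arcPts (T,H) := by
    rintro ⟨_, h2⟩ ⟨h3, _⟩
    have c1 := a4.mp h2; have c2 := a5.mp h3
    have hsub : arcPts (A,B) ⊆ arcPts (T,H) := by
      intro x hx
      obtain ⟨ξ, k1, k2, k3⟩ := lift1 (x - A)
      rw [md x ξ k1 k2 k3]
      exact RL_RL_incl hβ0 hτ0 hη0 c1 c2 k1 k2 ((mc x ξ k1 k2 k3).mp hx)
    exact (Set.ssubset_iff_of_subset hsub).mpr ⟨T, mem_arc_left T H,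
      fun hmem => RL_RL_notmem hβ0 hτ0 hη0 c1 c2 ((mc T τ hτa hτb hτeq).mp hmem)⟩
  have F3 : OnRight (A,B) (T,H) → OnRight (T,H) (A,B) →
      arcPts (A,B) ∩ arcPts (T,H) = ∅ ∧ arcPts (A,B) ∪ arcPts (T,H) ≠ Set.univ := by
    rintro ⟨h1, h2⟩ ⟨h3, _⟩
    have c1 := a3.mp h1; have c2 := a4.mp h2; have c3 := a7.mp h3
    constructor
    · apply Set.eq_empty_iff_forall_notMem.mpr
      rintro x ⟨hx1, hx2⟩
      obtain ⟨ξ, k1, k2, k3⟩ := lift1 (x - A)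
      exact RL_RR_empty hβ0 hτ0 hη0 c1 c2 c3 k1 k2 ((mc x ξ k1 k2 k3).mp hx1)
        ((md x ξ k1 k2 k3).mp hx2)
    · obtain ⟨ξ, k1, k2, kc, kd⟩ := RL_RR_notuniv hβ0 hτ0 hτb hη0 c1 c2 c3
      intro hU
      have k3 : (ξ:Circle1) = ((ξ:Circle1) + A) - A := by rw [add_sub_cancel_right]
      rcases Set.eq_univ_iff_forall.mp hU ((ξ:Circle1) + A) with hm | hm
      · exact kc ((mc _ ξ k1 k2 k3).mp hm)
      · exact kd ((md _ ξ k1 k2 k3).mp hm)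
  have F4 : OnLeft (A,B) (T,H) → OnLeft (T,H) (A,B) →
      arcPts (A,B) ∪ arcPts (T,H) = Set.univ := by
    rintro ⟨h1, h2⟩ ⟨h3, _⟩
    have c1 := a1.mp h1; have c2 := a2.mp h2; have c3 := a5.mp h3
    apply Set.eq_univ_iff_forall.mpr
    intro x
    obtain ⟨ξ, k1, k2, k3⟩ := lift1 (x - A)
    rcases RL_LL_univ hβ0 hτ0 hη0 c1 c2 c3 k1 k2 with hm | hm
    · exact Or.inl ((mc x ξ k1 k2 k3).mpr hm)
    · exact Or.inr ((md x ξ k1 k2 k3).mpr hm)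
  have F5 : Crosses (A,B) (T,H) → ArcsOverlap (A,B) (T,H) := by
    rintro (⟨h1, h2⟩ | ⟨h1, h2⟩)
    · have c1 := a1.mp h1; have c2 := a4.mp h2
      refine ⟨⟨T, mem_arc h1.btw, mem_arc_left T H⟩, ?_, ?_, ?_⟩
      · intro hsub
        exact RL_X1_anotind hβ0 hτ0 hη0 c1 c2 ((md A 0 le_rfl one_pos hA0).mp (hsub (mem_arc_left A B)))
      · intro hsub
        exact RL_X1_hnotinc hβ0 hτ0 hη0 c1 c2
          ((mc H η hηa hηb hηeq).mp (hsub (mem_arc_right T H)))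
      · obtain ⟨ξ, k1, k2, kc, kd⟩ := RL_X1_notuniv hβ0 hτ0 hη0 hηb c1 c2
        intro hU
        have k3 : (ξ:Circle1) = ((ξ:Circle1) + A) - A := by rw [add_sub_cancel_right]
        rcases Set.eq_univ_iff_forall.mp hU ((ξ:Circle1) + A) with hm | hm
        · exact kc ((mc _ ξ k1 k2 k3).mp hm)
        · exact kd ((md _ ξ k1 k2 k3).mp hm)
    · have c1 := a2.mp h1; have c2 := a3.mp h2
      refine ⟨⟨H, mem_arc h1.btw, mem_arc_right T H⟩, ?_, ?_, ?_⟩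
      · intro hsub
        exact RL_X2_bnotind hβ0 hτ0 hη0 c1 c2
          ((md B β hβa hβb hβeq).mp (hsub (mem_arc_right A B)))
      · intro hsub
        exact RL_X2_tnotinc hβ0 hτ0 hη0 c1 c2 ((mc T τ hτa hτb hτeq).mp (hsub (mem_arc_left T H)))
      · obtain ⟨ξ, k1, k2, kc, kd⟩ := RL_X2_notuniv hβ0 hτ0 hτb hη0 c1 c2
        intro hU
        have k3 : (ξ:Circle1) = ((ξ:Circle1) + A) - A := by rw [add_sub_cancel_right]
        rcases Set.eq_univ_iff_forall.mp hU ((ξ:Circle1) + A) with hm | hm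
        · exact kc ((mc _ ξ k1 k2 k3).mp hm)
        · exact kd ((md _ ξ k1 k2 k3).mp hm)
  -- the five-fold classification
  have five : (OnLeft (A,B) (T,H) ∧ OnRight (T,H) (A,B)) ∨
      (OnRight (A,B) (T,H) ∧ OnLeft (T,H) (A,B)) ∨
      (OnRight (A,B) (T,H) ∧ OnRight (T,H) (A,B)) ∨
      (OnLeft (A,B) (T,H) ∧ OnLeft (T,H) (A,B)) ∨ Crosses (A,B) (T,H) := by
    rcases sbtw_total hAT hBT.symm hAB.symm with hT | hT <;>
      rcases sbtw_total hAH hBH.symm hAB.symm with hH | hH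
    · -- T left, H left : OnLeft c d
      rcases sbtw_total hAT.symm hAH hTH.symm with hA | hA <;>
        rcases sbtw_total hBT.symm hBH hTH.symm with hB | hB
      · exact Or.inr (Or.inr (Or.inr (Or.inl ⟨⟨hT, hH⟩, ⟨hA, hB⟩⟩)))
      · exfalso
        have o1 := C3_def3 hτ0 hβ0 (a1.mp hT)
        have o2 := C3_def3 hη0 hβ0 (a2.mp hH)
        have o3 := C3_def2 hτ0 hη0 (a5.mp hA)
        rcases a8.mp hB with ⟨x1,x2⟩|⟨x1,x2⟩|⟨x1,x2⟩ <;> linarith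
      · exfalso
        have o1 := C3_def3 hτ0 hβ0 (a1.mp hT)
        have o2 := C3_def3 hη0 hβ0 (a2.mp hH)
        have o3 := C3_def2 hη0 hτ0 (a7.mp hA)
        rcases a6.mp hB with ⟨x1,x2⟩|⟨x1,x2⟩|⟨x1,x2⟩ <;> linarith
      · exact Or.inl ⟨⟨hT, hH⟩, ⟨hA, hB⟩⟩
    · -- T left, H right : crossing
      exact Or.inr (Or.inr (Or.inr (Or.inr (Or.inl ⟨hT, hH⟩))))
    · -- T right, H left : crossing
      exact Or.inr (Or.inr (Or.inr (Or.inr (Or.inr ⟨hH, hT⟩))))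
    · -- T right, H right : OnRight c d
      rcases sbtw_total hAT.symm hAH hTH.symm with hA | hA <;>
        rcases sbtw_total hBT.symm hBH hTH.symm with hB | hB
      · exact Or.inr (Or.inl ⟨⟨hT, hH⟩, ⟨hA, hB⟩⟩)
      · exfalso
        have o1 := C3_def1 hβ0 hτ0 (a3.mp hT)
        have o2 := C3_def1 hβ0 hη0 (a4.mp hH)
        have o3 := C3_def2 hτ0 hη0 (a5.mp hA)
        rcases a8.mp hB with ⟨x1,x2⟩|⟨x1,x2⟩|⟨x1,x2⟩ <;> linarith
      · exfalso
        have o1 := C3_def1 hβ0 hτ0 (a3.mp hT)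
        have o2 := C3_def1 hβ0 hη0 (a4.mp hH)
        have o3 := C3_def2 hη0 hτ0 (a7.mp hA)
        rcases a6.mp hB with ⟨x1,x2⟩|⟨x1,x2⟩|⟨x1,x2⟩ <;> linarith
      · exact Or.inr (Or.inr (Or.inl ⟨⟨hT, hH⟩, ⟨hA, hB⟩⟩))
  refine ⟨⟨fun ⟨h1,h2⟩ => F1 h1 h2, fun hss => ?_⟩,
         ⟨fun ⟨h1,h2⟩ => F2 h1 h2, fun hss => ?_⟩,
         ⟨fun ⟨h1,h2⟩ => (F3 h1 h2).1, fun hE => ?_⟩,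
         ⟨fun ⟨h1,h2⟩ => F4 h1 h2, fun hU => ?_⟩,
         ⟨fun h => F5 h, fun hOv => ?_⟩⟩
  · rcases five with ⟨x,y⟩|⟨x,y⟩|⟨x,y⟩|⟨x,y⟩|x
    · exact ⟨x,y⟩
    · exact absurd (hss.trans (F2 x y)) (ssubset_irrefl _)
    · exfalso
      have hE := (F3 x y).1
      have hmem : T ∈ arcPts (A,B) ∩ arcPts (T,H) := ⟨hss.subset (mem_arc_left T H), mem_arc_left T H⟩
      rw [hE] at hmem
      exact hmem
    · exact absurd ((Set.union_eq_left.mpr hss.subset).symm.trans (F4 x y))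
        (arc_ne_univ hAB)
    · exact absurd hss.subset (F5 x).2.2.1
  · rcases five with ⟨x,y⟩|⟨x,y⟩|⟨x,y⟩|⟨x,y⟩|x
    · exact absurd (hss.trans (F1 x y)) (ssubset_irrefl _)
    · exact ⟨x,y⟩
    · exfalso
      have hE := (F3 x y).1
      have hmem : A ∈ arcPts (A,B) ∩ arcPts (T,H) := ⟨mem_arc_left A B, hss.subset (mem_arc_left A B)⟩
      rw [hE] at hmem
      exact hmem
    · exact absurd ((Set.union_eq_right.mpr hss.subset).symm.trans (F4 x y))
        (arc_ne_univ hTH)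
    · exact absurd hss.subset (F5 x).2.1
  · rcases five with ⟨x,y⟩|⟨x,y⟩|⟨x,y⟩|⟨x,y⟩|x
    · exfalso
      have hmem : T ∈ arcPts (A,B) ∩ arcPts (T,H) := ⟨(F1 x y).subset (mem_arc_left T H), mem_arc_left T H⟩
      rw [hE] at hmem
      exact hmem
    · exfalso
      have hmem : A ∈ arcPts (A,B) ∩ arcPts (T,H) := ⟨mem_arc_left A B, (F2 x y).subset (mem_arc_left A B)⟩
      rw [hE] at hmem
      exact hmem
    · exact ⟨x,y⟩
    · exfalso
      have hmem : T ∈ arcPts (A,B) ∩ arcPts (T,H) := ⟨mem_arc x.1.btw, mem_arc_left T H⟩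
      rw [hE] at hmem
      exact hmem
    · exfalso
      obtain ⟨z, hz⟩ := (F5 x).1
      rw [hE] at hz
      exact hz
  · rcases five with ⟨x,y⟩|⟨x,y⟩|⟨x,y⟩|⟨x,y⟩|x
    · exact absurd ((Set.union_eq_left.mpr (F1 x y).subset).symm.trans hU) (arc_ne_univ hAB)
    · exact absurd ((Set.union_eq_right.mpr (F2 x y).subset).symm.trans hU) (arc_ne_univ hTH)
    · exact absurd hU (F3 x y).2
    · exact ⟨x,y⟩
    · exact absurd hU (F5 x).2.2.2
  · rcases five with ⟨x,y⟩|⟨x,y⟩|⟨x,y⟩|⟨x,y⟩|x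
    · exact absurd (F1 x y).subset hOv.2.2.1
    · exact absurd (F2 x y).subset hOv.2.1
    · exfalso
      obtain ⟨z, hz⟩ := hOv.1
      rw [(F3 x y).1] at hz
      exact hz
    · exact absurd (F4 x y) hOv.2.2.2
    · exact x

lemma chord_five {A B T H : Circle1} (hAB : A ≠ B) (hAT : A ≠ T) (hAH : A ≠ H)
    (hBT : B ≠ T) (hBH : B ≠ H) (hTH : T ≠ H) :
    (OnLeft (A,B) (T,H) ∧ OnRight (T,H) (A,B)) ∨
    (OnRight (A,B) (T,H) ∧ OnLeft (T,H) (A,B)) ∨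
    (OnRight (A,B) (T,H) ∧ OnRight (T,H) (A,B)) ∨
    (OnLeft (A,B) (T,H) ∧ OnLeft (T,H) (A,B)) ∨ Crosses (A,B) (T,H) := by
  obtain ⟨β, hβa, hβb, hβeq⟩ := lift1 (B - A)
  obtain ⟨τ, hτa, hτb, hτeq⟩ := lift1 (T - A)
  obtain ⟨η, hηa, hηb, hηeq⟩ := lift1 (H - A)
  have hβ0 : 0 < β := hβa.lt_of_ne (fun hz => hAB
    (sub_eq_zero.mp (by rw [← hβeq, ← hz]; rfl)).symm)
  have hτ0 : 0 < τ := hτa.lt_of_ne (fun hz => hAT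
    (sub_eq_zero.mp (by rw [← hτeq, ← hz]; rfl)).symm)
  have hη0 : 0 < η := hηa.lt_of_ne (fun hz => hAH
    (sub_eq_zero.mp (by rw [← hηeq, ← hz]; rfl)).symm)
  have hβτ : β ≠ τ := fun hq => hBT (by
    have h2 : B - A = T - A := by rw [← hβeq, ← hτeq, hq]
    exact sub_left_inj.mp h2)
  have hβη : β ≠ η := fun hq => hBH (by
    have h2 : B - A = H - A := by rw [← hβeq, ← hηeq, hq]
    exact sub_left_inj.mp h2)
  have hτη : τ ≠ η := fun hq => hTH (by
    have h2 : T - A = H - A := by rw [← hτeq, ← hηeq, hq]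
    exact sub_left_inj.mp h2)
  have hA0 : ((0:ℝ) : Circle1) = A - A := by rw [sub_self]; rfl
  have a1 : sbtw A T B ↔ C3 0 τ β :=
    sbtw_shift hA0 hτeq hβeq le_rfl one_pos hτa hτb hβa hβb hτ0.ne hβτ.symm hβ0.ne'
  have a2 : sbtw A H B ↔ C3 0 η β :=
    sbtw_shift hA0 hηeq hβeq le_rfl one_pos hηa hηb hβa hβb hη0.ne hβη.symm hβ0.ne'
  have a3 : sbtw B T A ↔ C3 β τ 0 :=
    sbtw_shift hβeq hτeq hA0 hβa hβb hτa hτb le_rfl one_pos hβτ hτ0.ne' hβ0.ne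
  have a4 : sbtw B H A ↔ C3 β η 0 :=
    sbtw_shift hβeq hηeq hA0 hβa hβb hηa hηb le_rfl one_pos hβη hη0.ne' hβ0.ne
  have a5 : sbtw T A H ↔ C3 τ 0 η :=
    sbtw_shift hτeq hA0 hηeq hτa hτb le_rfl one_pos hηa hηb hτ0.ne' hη0.ne hτη.symm
  have a6 : sbtw T B H ↔ C3 τ β η :=
    sbtw_shift hτeq hβeq hηeq hτa hτb hβa hβb hηa hηb hβτ.symm hβη hτη.symm
  have a7 : sbtw H A T ↔ C3 η 0 τ :=
    sbtw_shift hηeq hA0 hτeq hηa hηb le_rfl one_pos hτa hτb hη0.ne' hτ0.ne hτη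
  have a8 : sbtw H B T ↔ C3 η β τ :=
    sbtw_shift hηeq hβeq hτeq hηa hηb hβa hβb hτa hτb hβη.symm hβτ hτη
  rcases sbtw_total hAT hBT.symm hAB.symm with hT | hT <;>
    rcases sbtw_total hAH hBH.symm hAB.symm with hH | hH
  · -- T left, H left : OnLeft c d
    rcases sbtw_total hAT.symm hAH hTH.symm with hA | hA <;>
      rcases sbtw_total hBT.symm hBH hTH.symm with hB | hB
    · exact Or.inr (Or.inr (Or.inr (Or.inl ⟨⟨hT, hH⟩, ⟨hA, hB⟩⟩)))
    · exfalso
      have o1 := C3_def3 hτ0 hβ0 (a1.mp hT)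
      have o2 := C3_def3 hη0 hβ0 (a2.mp hH)
      have o3 := C3_def2 hτ0 hη0 (a5.mp hA)
      rcases a8.mp hB with ⟨x1,x2⟩|⟨x1,x2⟩|⟨x1,x2⟩ <;> linarith
    · exfalso
      have o1 := C3_def3 hτ0 hβ0 (a1.mp hT)
      have o2 := C3_def3 hη0 hβ0 (a2.mp hH)
      have o3 := C3_def2 hη0 hτ0 (a7.mp hA)
      rcases a6.mp hB with ⟨x1,x2⟩|⟨x1,x2⟩|⟨x1,x2⟩ <;> linarith
    · exact Or.inl ⟨⟨hT, hH⟩, ⟨hA, hB⟩⟩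
  · -- T left, H right : crossing
    exact Or.inr (Or.inr (Or.inr (Or.inr (Or.inl ⟨hT, hH⟩))))
  · -- T right, H left : crossing
    exact Or.inr (Or.inr (Or.inr (Or.inr (Or.inr ⟨hH, hT⟩))))
  · -- T right, H right : OnRight c d
    rcases sbtw_total hAT.symm hAH hTH.symm with hA | hA <;>
      rcases sbtw_total hBT.symm hBH hTH.symm with hB | hB
    · exact Or.inr (Or.inl ⟨⟨hT, hH⟩, ⟨hA, hB⟩⟩)
    · exfalso
      have o1 := C3_def1 hβ0 hτ0 (a3.mp hT)
      have o2 := C3_def1 hβ0 hη0 (a4.mp hH)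
      have o3 := C3_def2 hτ0 hη0 (a5.mp hA)
      rcases a8.mp hB with ⟨x1,x2⟩|⟨x1,x2⟩|⟨x1,x2⟩ <;> linarith
    · exfalso
      have o1 := C3_def1 hβ0 hτ0 (a3.mp hT)
      have o2 := C3_def1 hβ0 hη0 (a4.mp hH)
      have o3 := C3_def2 hη0 hτ0 (a7.mp hA)
      rcases a6.mp hB with ⟨x1,x2⟩|⟨x1,x2⟩|⟨x1,x2⟩ <;> linarith
    · exact Or.inr (Or.inr (Or.inl ⟨⟨hT, hH⟩, ⟨hA, hB⟩⟩))

lemma onLeft_onRight_excl {c d : Circle1 × Circle1} (h : OnLeft c d) (h' : OnRight c d) :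
    False := sbtw_asymm h.1 h'.1

lemma onLeft_crosses_excl {c d : Circle1 × Circle1} (h : OnLeft c d) (h' : Crosses c d) :
    False := by
  rcases h' with ⟨x1, x2⟩ | ⟨x1, x2⟩
  · exact sbtw_asymm h.2 x2
  · exact sbtw_asymm h.1 x2

lemma onRight_crosses_excl {c d : Circle1 × Circle1} (h : OnRight c d) (h' : Crosses c d) :
    False := by
  rcases h' with ⟨x1, x2⟩ | ⟨x1, x2⟩
  · exact sbtw_asymm h.1 x1
  · exact sbtw_asymm h.2 x1

section GraphLemmas
variable {V : Type*} {G : SimpleGraph V}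

lemma mem_cnbr {v u : V} : u ∈ cnbr G v ↔ u = v ∨ G.Adj v u := by
  simp [cnbr]

lemma self_mem_cnbr (v : V) : v ∈ cnbr G v := mem_cnbr.mpr (Or.inl rfl)

lemma not_di_cs {v u : V} (h1 : Di G v u) (h2 : Cs G v u) : False := by
  rcases mem_cnbr.mp (h2.2.subset (self_mem_cnbr u)) with rfl | ha
  · exact h1.1 rfl
  · exact h1.2 ha

lemma not_di_cd {v u : V} (h1 : Di G v u) (h2 : Cd G v u) : False := by
  rcases mem_cnbr.mp (h2.2.subset (self_mem_cnbr v)) with h | ha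
  · exact h1.1 h
  · exact h1.2 ha.symm

lemma not_di_cc {v u : V} (h1 : Di G v u) (h2 : Cc G v u) : False := h1.2 h2.2.1

lemma not_cs_cd {v u : V} (h1 : Cs G v u) (h2 : Cd G v u) : False :=
  ssubset_irrefl _ (h1.2.trans h2.2)

lemma not_cs_cc {v u : V} (hun : NoUniversal G) (h1 : Cs G v u) (h2 : Cc G v u) : False :=
  hun v (((Set.union_eq_left.mpr h1.2.subset).symm).trans h2.2.2.1)

lemma not_cd_cc {v u : V} (hun : NoUniversal G) (h1 : Cd G v u) (h2 : Cc G v u) : False :=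
  hun u (((Set.union_eq_right.mpr h1.2.subset).symm).trans h2.2.2.1)

lemma di_symm {v u : V} : Di G v u ↔ Di G u v :=
  ⟨fun ⟨h1, h2⟩ => ⟨h1.symm, fun ha => h2 ha.symm⟩,
   fun ⟨h1, h2⟩ => ⟨h1.symm, fun ha => h2 ha.symm⟩⟩

lemma cs_iff_cd {v u : V} : Cs G v u ↔ Cd G u v :=
  ⟨fun ⟨h1, h2⟩ => ⟨h1.symm, h2⟩, fun ⟨h1, h2⟩ => ⟨h1.symm, h2⟩⟩

lemma cc_symm {v u : V} : Cc G v u ↔ Cc G u v := by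
  constructor <;> rintro ⟨h1, h2, h3, h4, h5⟩ <;>
    exact ⟨h1.symm, h2.symm, by rwa [Set.union_comm], h5, h4⟩

lemma ov_symm {v u : V} : Ov G v u ↔ Ov G u v := by
  constructor <;> rintro ⟨h1, h2, h3, h4, h5⟩
  · exact ⟨h1.symm, fun x => h2 (di_symm.mp x), fun x => h4 (cs_iff_cd.mp x),
      fun x => h3 (cs_iff_cd.mpr x), fun x => h5 (cc_symm.mp x)⟩
  · exact ⟨h1.symm, fun x => h2 (di_symm.mp x), fun x => h4 (cs_iff_cd.mp x),
      fun x => h3 (cs_iff_cd.mpr x), fun x => h5 (cc_symm.mp x)⟩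

lemma rel_cases {v u : V} (h : v ≠ u) :
    Di G v u ∨ Cs G v u ∨ Cd G v u ∨ Cc G v u ∨ Ov G v u := by
  by_cases h1 : Di G v u
  · exact Or.inl h1
  by_cases h2 : Cs G v u
  · exact Or.inr (Or.inl h2)
  by_cases h3 : Cd G v u
  · exact Or.inr (Or.inr (Or.inl h3))
  by_cases h4 : Cc G v u
  · exact Or.inr (Or.inr (Or.inr (Or.inl h4)))
  · exact Or.inr (Or.inr (Or.inr (Or.inr ⟨h, h1, h2, h3, h4⟩)))

lemma mem_left_iff {v u : V} : u ∈ leftSet G v ↔ Cs G v u ∨ Cc G v u := Iff.rfl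
lemma mem_right_iff {v u : V} : u ∈ rightSet G v ↔ Di G v u ∨ Cd G v u := Iff.rfl

lemma di_iff_sides {v u : V} (hun : NoUniversal G) :
    Di G v u ↔ (u ∈ rightSet G v ∧ v ∈ rightSet G u) := by
  constructor
  · intro hd
    exact ⟨Or.inl hd, Or.inl (di_symm.mp hd)⟩
  · rintro ⟨hr1, hr2⟩
    rcases hr1 with hd | hcd
    · exact hd
    · exfalso
      have hcs : Cs G u v := cs_iff_cd.mpr hcd
      rcases hr2 with hd' | hcd'
      · exact not_di_cs hd' hcs
      · exact not_cs_cd hcs hcd'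

lemma cs_iff_sides {v u : V} (hun : NoUniversal G) :
    Cs G v u ↔ (u ∈ leftSet G v ∧ v ∈ rightSet G u) := by
  constructor
  · intro hc
    exact ⟨Or.inl hc, Or.inr (cs_iff_cd.mp hc)⟩
  · rintro ⟨hl, hr⟩
    rcases hl with hc | hcc
    · exact hc
    · exfalso
      have hcc' : Cc G u v := cc_symm.mp hcc
      rcases hr with hd | hcd
      · exact not_di_cc hd hcc'
      · exact not_cd_cc hun hcd hcc'

lemma cd_iff_sides {v u : V} (hun : NoUniversal G) :
    Cd G v u ↔ (u ∈ rightSet G v ∧ v ∈ leftSet G u) := by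
  constructor
  · intro hc
    exact ⟨Or.inr hc, Or.inl (cs_iff_cd.mpr hc)⟩
  · rintro ⟨hr, hl⟩
    rcases hr with hd | hcd
    · exfalso
      have hd' : Di G u v := di_symm.mp hd
      rcases hl with hc | hcc
      · exact not_di_cs hd' hc
      · exact not_di_cc hd' hcc
    · exact hcd

lemma cc_iff_sides {v u : V} (hun : NoUniversal G) :
    Cc G v u ↔ (u ∈ leftSet G v ∧ v ∈ leftSet G u) := by
  constructor
  · intro hc
    exact ⟨Or.inr hc, Or.inr (cc_symm.mp hc)⟩
  · rintro ⟨hl1, hl2⟩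
    rcases hl1 with hc | hcc
    · exfalso
      have hcd : Cd G u v := cs_iff_cd.mp hc
      rcases hl2 with hc' | hcc'
      · exact not_cs_cd hc' hcd
      · exact not_cd_cc hun hcd hcc'
    · exact hcc

lemma adj_iff_not_di {v u : V} (h : v ≠ u) : G.Adj u v ↔ ¬ Di G v u := by
  constructor
  · exact fun ha hd => hd.2 ha.symm
  · intro hnd
    by_contra hna
    exact hnd ⟨h, fun ha => hna ha.symm⟩

end GraphLemmas

section Endpoints
variable {V : Type*}

lemma ep_ne_all {ψ : V → Circle1 × Circle1} (hD : DistinctEndpointsOn Set.univ ψ)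
    {v u : V} (hvu : v ≠ u) :
    (ψ v).1 ≠ (ψ v).2 ∧ (ψ u).1 ≠ (ψ u).2 ∧ (ψ v).1 ≠ (ψ u).1 ∧ (ψ v).1 ≠ (ψ u).2 ∧
    (ψ v).2 ≠ (ψ u).1 ∧ (ψ v).2 ≠ (ψ u).2 := by
  have key : ∀ (a b : V) (x y : Bool), (a, x) ≠ (b, y) → lep ψ (a, x) ≠ lep ψ (b, y) :=
    fun a b x y hne he => hne (hD (Set.mem_univ _) (Set.mem_univ _) he)
  refine ⟨key v v false true (by simp), key u u false true (by simp),
    key v u false false (by simp [hvu]), key v u false true (by simp [hvu]),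
    key v u true false (by simp [hvu]), key v u true true (by simp [hvu])⟩

end Endpoints

section MainLemmas
variable {V : Type*}

lemma norm_to_conf {G : SimpleGraph V} (hun : NoUniversal G)
    {ψ : V → Circle1 × Circle1} (h : IsNormalizedModel G ψ) :
    IsConformalOn G Set.univ ψ := by
  obtain ⟨⟨hD, _⟩, hN⟩ := h
  refine ⟨⟨hD, ?_⟩, ?_⟩
  · intro u _ v _ huv
    have e := ep_ne_all hD huv
    have M := master e.1 e.2.2.1 e.2.2.2.1 e.2.2.2.2.1 e.2.2.2.2.2 e.2.1
    have hOv := (hN v u huv.symm).2.2.2.2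
    exact hOv.trans M.2.2.2.2.symm
  · intro v _ u _ huv
    have hvu : v ≠ u := huv.symm
    have e := ep_ne_all hD hvu
    have M := master e.1 e.2.2.1 e.2.2.2.1 e.2.2.2.2.1 e.2.2.2.2.2 e.2.1
    have N := hN u v huv
    have five := chord_five e.1 e.2.2.1 e.2.2.2.1 e.2.2.2.2.1 e.2.2.2.2.2 e.2.1
    constructor
    · constructor
      · intro hl
        rcases hl with hc | hcc
        · exact (M.1.mpr (N.2.1.mp hc)).1
        · exact (M.2.2.2.1.mpr (N.2.2.2.1.mp hcc)).1
      · intro hOL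
        rcases five with ⟨x,y⟩|⟨x,y⟩|⟨x,y⟩|⟨x,y⟩|x
        · exact Or.inl (N.2.1.mpr (M.1.mp ⟨x,y⟩))
        · exact absurd hOL (fun hh => onLeft_onRight_excl hh x)
        · exact absurd hOL (fun hh => onLeft_onRight_excl hh x)
        · exact Or.inr (N.2.2.2.1.mpr (M.2.2.2.1.mp ⟨x,y⟩))
        · exact absurd hOL (fun hh => onLeft_crosses_excl hh x)
    · constructor
      · intro hr
        rcases hr with hd | hcd
        · exact (M.2.2.1.mpr (N.1.mp hd)).1
        · exact (M.2.1.mpr (N.2.2.1.mp hcd)).1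
      · intro hOR
        rcases five with ⟨x,y⟩|⟨x,y⟩|⟨x,y⟩|⟨x,y⟩|x
        · exact absurd hOR (fun hh => onLeft_onRight_excl x hh)
        · exact Or.inr (N.2.2.1.mpr (M.2.1.mp ⟨x,y⟩))
        · exact Or.inl (N.1.mpr (M.2.2.1.mp ⟨x,y⟩))
        · exact absurd hOR (fun hh => onLeft_onRight_excl x hh)
        · exact absurd hOR (fun hh => onRight_crosses_excl hh x)

lemma conf_to_norm {G : SimpleGraph V} (hun : NoUniversal G)
    {φ : V → Circle1 × Circle1} (h : IsConformalOn G Set.univ φ) :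
    IsNormalizedModel G φ := by
  obtain ⟨⟨hD, hcr⟩, hside⟩ := h
  have P : ∀ u v : V, u ≠ v →
      ((Di G v u ↔ arcPts (φ v) ∩ arcPts (φ u) = ∅) ∧
       (Cs G v u ↔ arcPts (φ u) ⊂ arcPts (φ v)) ∧
       (Cd G v u ↔ arcPts (φ v) ⊂ arcPts (φ u)) ∧
       (Cc G v u ↔ arcPts (φ v) ∪ arcPts (φ u) = Set.univ) ∧
       (Ov G v u ↔ ArcsOverlap (φ v) (φ u))) := by
    intro u v huv
    have hvu : v ≠ u := huv.symm
    have e := ep_ne_all hD hvu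
    have M := master e.1 e.2.2.1 e.2.2.2.1 e.2.2.2.2.1 e.2.2.2.2.2 e.2.1
    have s1 := hside v (Set.mem_univ v) u (Set.mem_univ u) huv
    have s2 := hside u (Set.mem_univ u) v (Set.mem_univ v) hvu
    have hOv : Ov G v u ↔ Crosses (φ v) (φ u) :=
      hcr v (Set.mem_univ v) u (Set.mem_univ u) hvu
    refine ⟨?_, ?_, ?_, ?_, ?_⟩
    · rw [di_iff_sides hun, s1.2, s2.2]
      exact M.2.2.1
    · rw [cs_iff_sides hun, s1.1, s2.2]
      exact M.1
    · rw [cd_iff_sides hun, s1.2, s2.1]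
      exact M.2.1
    · rw [cc_iff_sides hun, s1.1, s2.1]
      exact M.2.2.2.1
    · exact hOv.trans M.2.2.2.2
  refine ⟨⟨hD, ?_⟩, P⟩
  intro u v huv
  rw [adj_iff_not_di huv.symm, (P u v huv).1,
    Set.inter_comm (arcPts (φ v)) (arcPts (φ u))]
  exact Set.nonempty_iff_ne_empty.symm

end MainLemmas

/-- For a circular-arc graph `G` with no twins and no universal vertices,
straightening maps normalized models of `G` to conformal models of `G_ov`, bending maps
conformal models of `G_ov` to normalized models of `G`, and the two operations are
mutually inverse; hence they give a one-to-one correspondence between normalized models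
of `G` and conformal models of `G_ov`. -/
theorem stmt3 {V : Type*} [Fintype V] (G : SimpleGraph V)
    (hca : IsCircularArc G) (htw : NoTwins G) (hun : NoUniversal G) :
    (∀ ψ : V → Circle1 × Circle1, IsNormalizedModel G ψ →
        IsConformalOn G Set.univ (straighten ψ)) ∧
    (∀ φ : V → Circle1 × Circle1, IsConformalOn G Set.univ φ →
        IsNormalizedModel G (bend φ)) ∧
    (∀ ψ : V → Circle1 × Circle1, IsNormalizedModel G ψ → bend (straighten ψ) = ψ) ∧
    (∀ φ : V → Circle1 × Circle1, IsConformalOn G Set.univ φ →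
        straighten (bend φ) = φ) := by
  refine ⟨fun ψ h => norm_to_conf hun h, fun φ h => conf_to_norm hun h,
    fun ψ _ => rfl, fun φ _ => rfl⟩

end CAIso
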